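/- Let n ≥ 0 and r ≥ 2 be integers. Then the number of pairs (μ, j) with j ≥ 1 an integer and μ an r-flat partition of n − j satisfying μ_j − μ_{j+1} = r−1 equals the number of pairs (ν, j) with j ≥ 1 an integer and ν an r-flat partition of n − rj satisfying ν_j = ν_{j+1} (in both cases parts beyond the length of the partition are taken to be 0): #{(μ, j) : j ≥ 1, μ ∈ F_r(n − j), μ_j − μ_{j+1} = r−1} = #{(ν, j) : j ≥ 1, ν ∈ F_r(n − rj), ν_j = ν_{j+1}}. -/

import Mathlib

open scoped Classical

namespace BeckPaper

/-- The parts of a partition, sorted in non-increasing order. -/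
def partsList {n : ℕ} (p : n.Partition) : List ℕ := p.parts.sort (· ≥ ·)

/-- The `i`-th part of a partition (`1`-indexed); `0` if `i` exceeds the number of parts. -/
def part {n : ℕ} (p : n.Partition) (i : ℕ) : ℕ := (partsList p).getD (i - 1) 0

/-- `ℓ(λ)`: the number of parts of `λ`. -/
def numParts {n : ℕ} (p : n.Partition) : ℕ := Multiset.card p.parts

/-- `ℓ_t(λ)`: the number of parts of `λ` congruent to `t` modulo `r`. -/
def lMod (r t : ℕ) {n : ℕ} (p : n.Partition) : ℕ :=
  Multiset.card (p.parts.filter (fun x => x % r = t % r))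

/-- `ℓ̄_t(λ)`: the number of different part sizes appearing at least `t` times in `λ`. -/
def lRep (t : ℕ) {n : ℕ} (p : n.Partition) : ℕ :=
  (p.parts.toFinset.filter (fun s => t ≤ p.parts.count s)).card

/-- `ℓ̄(λ)`: the number of different part sizes of `λ`. -/
def lDist {n : ℕ} (p : n.Partition) : ℕ := p.parts.toFinset.card

/-- `d_t(λ)`: the number of indices `1 ≤ i ≤ ℓ(λ)` with `λ_i − λ_{i+1} ≥ t`. -/
def dCount (t : ℕ) {n : ℕ} (p : n.Partition) : ℕ :=
  ((Finset.Icc 1 (numParts p)).filter (fun i => t ≤ part p i - part p (i + 1))).card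

/-- `λ ∈ O_r(n)`: no part is divisible by `r`. -/
def IsRegular (r : ℕ) {n : ℕ} (p : n.Partition) : Prop := ∀ x ∈ p.parts, ¬ r ∣ x

/-- `λ ∈ D_r(n)`: no part appears more than `r − 1` times. -/
def IsRestricted (r : ℕ) {n : ℕ} (p : n.Partition) : Prop :=
  ∀ s : ℕ, p.parts.count s ≤ r - 1

/-- `λ ∈ F_r(n)`: all differences of consecutive parts (with `λ_{k+1} = 0`) are `≤ r − 1`. -/
def IsFlat (r : ℕ) {n : ℕ} (p : n.Partition) : Prop :=
  ∀ i, 1 ≤ i → i ≤ numParts p → part p i - part p (i + 1) ≤ r - 1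

/-- `λ ∈ O_{1,r}(n)`: the set of part sizes divisible by `r` has exactly one element. -/
def IsOneRegular (r : ℕ) {n : ℕ} (p : n.Partition) : Prop :=
  (p.parts.toFinset.filter (fun s => r ∣ s)).card = 1

/-- `λ ∈ D_{1,r}(n)`: exactly one part size appears at least `r` times. -/
def IsOneRestricted (r : ℕ) {n : ℕ} (p : n.Partition) : Prop :=
  (p.parts.toFinset.filter (fun s => r ≤ p.parts.count s)).card = 1

/-- `λ ∈ F_{1,r}(n)`: exactly one difference of consecutive parts is `≥ r`, and all
other such differences are `≤ r − 1`. -/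
def IsOneFlat (r : ℕ) {n : ℕ} (p : n.Partition) : Prop :=
  ∃ i, (1 ≤ i ∧ i ≤ numParts p ∧ r ≤ part p i - part p (i + 1)) ∧
    ∀ j, 1 ≤ j → j ≤ numParts p → j ≠ i → part p j - part p (j + 1) ≤ r - 1

/-- `λ ∈ T_r(n)`: exactly one part size has multiplicity at least `r`, and that
multiplicity is strictly less than `2r`. -/
def IsInT (r : ℕ) {n : ℕ} (p : n.Partition) : Prop :=
  ∃ s : ℕ, (r ≤ p.parts.count s ∧ p.parts.count s < 2 * r) ∧
    ∀ s' : ℕ, r ≤ p.parts.count s' → s' = s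

/-- `i`-th entry (0-indexed) of a list, `0` past the end. -/
def nth (l : List ℕ) (i : ℕ) : ℕ := l[i]?.getD 0

lemma nth_eq_getElem {l : List ℕ} {i : ℕ} (h : i < l.length) : nth l i = l[i] := by
  simp [nth, List.getElem?_eq_getElem h]

lemma nth_eq_zero {l : List ℕ} {i : ℕ} (h : l.length ≤ i) : nth l i = 0 := by
  simp [nth, List.getElem?_eq_none h]

lemma lt_length_of_nth_ne {l : List ℕ} {i : ℕ} (h : nth l i ≠ 0) : i < l.length := by
  by_contra hc
  exact h (nth_eq_zero (le_of_not_gt hc))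

lemma nth_cons_zero {a : ℕ} {l : List ℕ} : nth (a :: l) 0 = a := by simp [nth]

lemma nth_cons_succ {a : ℕ} {l : List ℕ} {i : ℕ} : nth (a :: l) (i+1) = nth l i := by simp [nth]

lemma nth_anti {l : List ℕ} (hs : l.Pairwise (· ≥ ·)) {i k : ℕ} (hik : i ≤ k) :
    nth l k ≤ nth l i := by
  rcases lt_or_ge k l.length with hk | hk
  · have hi : i < l.length := lt_of_le_of_lt hik hk
    rcases lt_or_eq_of_le hik with h' | h'
    · have := (List.pairwise_iff_getElem.mp hs) i k hi hk h'
      rw [nth_eq_getElem hi, nth_eq_getElem hk]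
      exact this
    · subst h'; exact le_rfl
  · rw [nth_eq_zero hk]; exact Nat.zero_le _

lemma nth_step_anti {l : List ℕ} (h : ∀ i, nth l (i+1) ≤ nth l i) {i k : ℕ} (hik : i ≤ k) :
    nth l k ≤ nth l i := by
  induction k, hik using Nat.le_induction with
  | base => exact le_rfl
  | succ k hk ih => exact le_trans (h k) ih

lemma sorted_of_nth {l : List ℕ} (h : ∀ i, nth l (i+1) ≤ nth l i) : l.Pairwise (· ≥ ·) := by
  rw [List.pairwise_iff_getElem]
  intro i j hi hj hij
  have := nth_step_anti h (le_of_lt hij)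
  rwa [nth_eq_getElem hi, nth_eq_getElem hj] at this

lemma eq_of_nth : ∀ {l m : List ℕ}, (∀ x ∈ l, x ≠ 0) → (∀ x ∈ m, x ≠ 0) →
    (∀ i, nth l i = nth m i) → l = m
  | [], [], _, _, _ => rfl
  | [], b :: m, _, hm, h => absurd (h 0).symm (by simpa [nth] using hm b (by simp))
  | a :: l, [], hl, _, h => absurd (h 0) (by simpa [nth] using hl a (by simp))
  | a :: l, b :: m, hl, hm, h => by
    have h0 := h 0
    simp only [nth_cons_zero] at h0
    have ht := eq_of_nth (fun x hx => hl x (List.mem_cons_of_mem _ hx))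
      (fun x hx => hm x (List.mem_cons_of_mem _ hx))
      (fun i => by simpa only [nth_cons_succ] using h (i+1))
    rw [h0, ht]

lemma nth_filter {l : List ℕ} (hs : l.Pairwise (· ≥ ·)) (i : ℕ) :
    nth (l.filter (fun x => x ≠ 0)) i = nth l i := by
  induction l generalizing i with
  | nil => simp [nth]
  | cons a t ih =>
    by_cases ha : a = 0
    · subst ha
      have ht : ∀ x ∈ t, x = 0 := fun x hx =>
        Nat.le_zero.mp (List.rel_of_pairwise_cons hs hx)
      have h1 : (0 :: t).filter (fun x => x ≠ 0) = [] := by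
        rw [List.filter_eq_nil_iff]
        intro x hx
        rcases List.mem_cons.mp hx with h | h
        · simp [h]
        · simp [ht x h]
      have h2 : nth (0 :: t) i = 0 := by
        rcases lt_or_ge i (0 :: t).length with hi | hi
        · rw [nth_eq_getElem hi]
          rcases i with _ | i
          · rfl
          · exact ht _ (List.getElem_mem _)
        · exact nth_eq_zero hi
      rw [h1, h2]
      simp [nth]
    · have h1 : (a :: t).filter (fun x => x ≠ 0) = a :: t.filter (fun x => x ≠ 0) := by
        simp [List.filter_cons, ha]
      rw [h1]
      rcases i with _ | i
      · rw [nth_cons_zero, nth_cons_zero]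
      · rw [nth_cons_succ, nth_cons_succ]
        exact ih hs.of_cons i

lemma sum_filter_ne_zero (l : List ℕ) : (l.filter (fun x => x ≠ 0)).sum = l.sum := by
  induction l with
  | nil => rfl
  | cons a t ih =>
    rw [List.filter_cons]
    split_ifs with ha
    · rw [List.sum_cons, List.sum_cons, ih]
    · have ha' : a = 0 := by simpa using ha
      rw [ih, List.sum_cons, ha', Nat.zero_add]

lemma sum_map_sub {c : ℕ} : ∀ {L : List ℕ}, (∀ x ∈ L, c ≤ x) →
    (L.map (fun x => x - c)).sum + c * L.length = L.sum
  | [], _ => by simp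
  | a :: L, h => by
    have ih := sum_map_sub (fun x hx => h x (List.mem_cons_of_mem _ hx))
    have ha : c ≤ a := h a (List.mem_cons_self)
    simp only [List.map_cons, List.sum_cons, List.length_cons, Nat.mul_succ]
    omega

lemma sum_map_add (c : ℕ) (L : List ℕ) :
    (L.map (fun x => x + c)).sum = L.sum + c * L.length := by
  induction L with
  | nil => simp
  | cons a L ih =>
    simp only [List.map_cons, List.sum_cons, List.length_cons, Nat.mul_succ, ih]
    omega

lemma nth_append {l₁ l₂ : List ℕ} (i : ℕ) :
    nth (l₁ ++ l₂) i = if i < l₁.length then nth l₁ i else nth l₂ (i - l₁.length) := by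
  simp only [nth, List.getElem?_append]
  split <;> rfl

lemma nth_map_sub {c : ℕ} {L : List ℕ} (i : ℕ) :
    nth (L.map (fun x => x - c)) i = nth L i - c := by
  simp only [nth, List.getElem?_map]
  cases h : L[i]? <;> simp

lemma nth_map_add {c : ℕ} {L : List ℕ} {i : ℕ} (h : i < L.length) :
    nth (L.map (fun x => x + c)) i = nth L i + c := by
  rw [nth_eq_getElem (by simpa using h), nth_eq_getElem h]
  simp

lemma nth_take {l : List ℕ} {i j : ℕ} (h : i < j) : nth (l.take j) i = nth l i := by
  simp [nth, List.getElem?_take, h]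

lemma nth_drop (l : List ℕ) (j i : ℕ) : nth (l.drop j) i = nth l (j + i) := by
  simp [nth, List.getElem?_drop]

lemma nth_replicate_zero {k i : ℕ} : nth (List.replicate k 0) i = 0 := by
  simp only [nth, List.getElem?_replicate]
  split <;> rfl

/-- Pre-image list for the `A → B` map: subtract `c` from the first `j` entries. -/
def fpre (c j : ℕ) (l : List ℕ) : List ℕ := (l.take j).map (fun x => x - c) ++ l.drop j

def fl (c j : ℕ) (l : List ℕ) : List ℕ := (fpre c j l).filter (fun x => x ≠ 0)

def gpre (c j : ℕ) (l : List ℕ) : List ℕ :=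
  (l.take j ++ List.replicate (j - l.length) 0).map (fun x => x + c) ++ l.drop j

def gl (c j : ℕ) (l : List ℕ) : List ℕ := (gpre c j l).filter (fun x => x ≠ 0)

lemma nth_fpre (c j : ℕ) (l : List ℕ) (i : ℕ) :
    nth (fpre c j l) i = if i < j then nth l i - c else nth l i := by
  have hlen : ((l.take j).map (fun x => x - c)).length = min j l.length := by simp
  rw [fpre, nth_append, hlen]
  split_ifs with h1 h2 h2
  · rw [nth_map_sub, nth_take h2]
  · omega
  · rw [nth_drop, nth_eq_zero (show l.length ≤ i by omega),
      nth_eq_zero (show l.length ≤ j + (i - min j l.length) by omega)]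
    omega
  · rw [nth_drop]
    rcases le_or_gt j l.length with h | h
    · have e : j + (i - min j l.length) = i := by omega
      rw [e]
    · rw [nth_eq_zero (by omega), nth_eq_zero (by omega)]

lemma nth_gpre (c j : ℕ) (l : List ℕ) (i : ℕ) :
    nth (gpre c j l) i = if i < j then nth l i + c else nth l i := by
  have hlen : ((l.take j ++ List.replicate (j - l.length) 0).map (fun x => x + c)).length = j := by
    simp; omega
  rw [gpre, nth_append, hlen]
  split_ifs with h1
  · rw [nth_map_add (by simp; omega)]
    congr 1
    rw [nth_append]
    have hlen2 : (l.take j).length = min j l.length := by simp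
    rw [hlen2]
    split_ifs with h2
    · rw [nth_take (by omega)]
    · rw [nth_replicate_zero, nth_eq_zero (show l.length ≤ i by omega)]
  · rw [nth_drop]
    rcases le_or_gt j l.length with h | h
    · have e : j + (i - j) = i := by omega
      rw [e]
    · rw [nth_eq_zero (by omega), nth_eq_zero (by omega)]

lemma fl_pos (c j : ℕ) (l : List ℕ) : ∀ x ∈ fl c j l, x ≠ 0 := by
  intro x hx
  simpa using (List.mem_filter.mp hx).2

lemma gl_pos (c j : ℕ) (l : List ℕ) : ∀ x ∈ gl c j l, x ≠ 0 := by
  intro x hx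
  simpa using (List.mem_filter.mp hx).2

section
variable {c j : ℕ} {l : List ℕ}

lemma fpre_sorted (hs : l.Pairwise (· ≥ ·)) (hcond : nth l (j-1) = nth l j + c) (hj : 1 ≤ j) :
    (fpre c j l).Pairwise (· ≥ ·) := by
  apply sorted_of_nth
  intro i
  rw [nth_fpre, nth_fpre]
  have h1 := nth_anti hs (show i ≤ i + 1 by omega)
  rcases lt_trichotomy (i+1) j with h | h | h
  · rw [if_pos (show i+1 < j from h), if_pos (show i < j by omega)]
    omega
  · rw [if_neg (show ¬(i+1 < j) by omega), if_pos (show i < j by omega)]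
    have e2 : nth l (i+1) = nth l j := by rw [h]
    have e3 : nth l i = nth l (j-1) := by rw [show i = j - 1 by omega]
    omega
  · rw [if_neg (show ¬(i+1 < j) by omega), if_neg (show ¬(i < j) by omega)]
    exact h1

lemma fl_sorted (hs : l.Pairwise (· ≥ ·)) (hcond : nth l (j-1) = nth l j + c) (hj : 1 ≤ j) :
    (fl c j l).Pairwise (· ≥ ·) :=
  (fpre_sorted hs hcond hj).filter _

lemma nth_fl (hs : l.Pairwise (· ≥ ·)) (hcond : nth l (j-1) = nth l j + c) (hj : 1 ≤ j) (i : ℕ) :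
    nth (fl c j l) i = if i < j then nth l i - c else nth l i := by
  rw [fl, nth_filter (fpre_sorted hs hcond hj), nth_fpre]

lemma gpre_sorted (hs : l.Pairwise (· ≥ ·)) (hcond : nth l (j-1) = nth l j) (hj : 1 ≤ j) :
    (gpre c j l).Pairwise (· ≥ ·) := by
  apply sorted_of_nth
  intro i
  rw [nth_gpre, nth_gpre]
  have h1 := nth_anti hs (show i ≤ i + 1 by omega)
  rcases lt_trichotomy (i+1) j with h | h | h
  · rw [if_pos (show i+1 < j from h), if_pos (show i < j by omega)]
    omega
  · rw [if_neg (show ¬(i+1 < j) by omega), if_pos (show i < j by omega)]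
    have e2 : nth l (i+1) = nth l j := by rw [h]
    have e3 : nth l i = nth l (j-1) := by rw [show i = j - 1 by omega]
    omega
  · rw [if_neg (show ¬(i+1 < j) by omega), if_neg (show ¬(i < j) by omega)]
    exact h1

lemma gl_sorted (hs : l.Pairwise (· ≥ ·)) (hcond : nth l (j-1) = nth l j) (hj : 1 ≤ j) :
    (gl c j l).Pairwise (· ≥ ·) :=
  (gpre_sorted hs hcond hj).filter _

lemma nth_gl (hs : l.Pairwise (· ≥ ·)) (hcond : nth l (j-1) = nth l j) (hj : 1 ≤ j) (i : ℕ) :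
    nth (gl c j l) i = if i < j then nth l i + c else nth l i := by
  rw [gl, nth_filter (gpre_sorted hs hcond hj), nth_gpre]

lemma fl_sum (hs : l.Pairwise (· ≥ ·)) (hcond : nth l (j-1) = nth l j + c) (hc : 1 ≤ c)
    (hj : 1 ≤ j) : (fl c j l).sum + c * j = l.sum := by
  have hjlen : j ≤ l.length := by
    have : nth l (j-1) ≠ 0 := by omega
    have := lt_length_of_nth_ne this
    omega
  have htl : (l.take j).length = j := by simp; omega
  have hmem : ∀ x ∈ l.take j, c ≤ x := by
    intro x hx
    obtain ⟨i, hi, he⟩ := List.mem_iff_getElem.mp hx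
    rw [List.getElem_take] at he
    have : nth l i = x := by rw [nth_eq_getElem (by omega), he]
    have h2 := nth_anti hs (show i ≤ j - 1 by omega)
    omega
  have h1 := sum_map_sub hmem
  rw [htl] at h1
  have h2 := List.sum_take_add_sum_drop l j
  rw [fl, sum_filter_ne_zero, fpre, List.sum_append]
  omega

lemma gl_sum : (gl c j l).sum = l.sum + c * j := by
  have hlen : (l.take j ++ List.replicate (j - l.length) 0).length = j := by simp; omega
  have h1 := sum_map_add c (l.take j ++ List.replicate (j - l.length) 0)
  rw [hlen, List.sum_append, List.sum_replicate, smul_zero] at h1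
  have h2 := List.sum_take_add_sum_drop l j
  rw [gl, sum_filter_ne_zero, gpre, List.sum_append, h1]
  omega

lemma fl_flat (hs : l.Pairwise (· ≥ ·)) (hcond : nth l (j-1) = nth l j + c) (hj : 1 ≤ j)
    (hflat : ∀ i, nth l i - nth l (i+1) ≤ c) (i : ℕ) :
    nth (fl c j l) i - nth (fl c j l) (i+1) ≤ c := by
  rw [nth_fl hs hcond hj, nth_fl hs hcond hj]
  have h1 := hflat i
  rcases lt_trichotomy (i+1) j with h | h | h
  · rw [if_pos (show i+1 < j from h), if_pos (show i < j by omega)]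
    omega
  · rw [if_neg (show ¬(i+1 < j) by omega), if_pos (show i < j by omega)]
    have e2 : nth l (i+1) = nth l j := by rw [h]
    have e3 : nth l i = nth l (j-1) := by rw [show i = j - 1 by omega]
    omega
  · rw [if_neg (show ¬(i+1 < j) by omega), if_neg (show ¬(i < j) by omega)]
    exact h1

lemma gl_flat (hs : l.Pairwise (· ≥ ·)) (hcond : nth l (j-1) = nth l j) (hj : 1 ≤ j)
    (hflat : ∀ i, nth l i - nth l (i+1) ≤ c) (i : ℕ) :
    nth (gl c j l) i - nth (gl c j l) (i+1) ≤ c := by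
  rw [nth_gl hs hcond hj, nth_gl hs hcond hj]
  have h1 := hflat i
  rcases lt_trichotomy (i+1) j with h | h | h
  · rw [if_pos (show i+1 < j from h), if_pos (show i < j by omega)]
    omega
  · rw [if_neg (show ¬(i+1 < j) by omega), if_pos (show i < j by omega)]
    have e2 : nth l (i+1) = nth l j := by rw [h]
    have e3 : nth l i = nth l (j-1) := by rw [show i = j - 1 by omega]
    omega
  · rw [if_neg (show ¬(i+1 < j) by omega), if_neg (show ¬(i < j) by omega)]
    exact h1

lemma fl_cond (hs : l.Pairwise (· ≥ ·)) (hcond : nth l (j-1) = nth l j + c) (hj : 1 ≤ j) :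
    nth (fl c j l) (j-1) = nth (fl c j l) j := by
  rw [nth_fl hs hcond hj (j-1), nth_fl hs hcond hj j, if_pos (show j - 1 < j by omega),
    if_neg (show ¬(j < j) by omega)]
  omega

lemma gl_cond (hs : l.Pairwise (· ≥ ·)) (hcond : nth l (j-1) = nth l j) (hj : 1 ≤ j) :
    nth (gl c j l) (j-1) = nth (gl c j l) j + c := by
  rw [nth_gl hs hcond hj (j-1), nth_gl hs hcond hj j, if_pos (show j - 1 < j by omega),
    if_neg (show ¬(j < j) by omega)]
  omega

lemma gl_fl (hs : l.Pairwise (· ≥ ·)) (hp : ∀ x ∈ l, x ≠ 0)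
    (hcond : nth l (j-1) = nth l j + c) (hj : 1 ≤ j) :
    gl c j (fl c j l) = l := by
  have hs' := fl_sorted hs hcond hj
  have hcond' := fl_cond hs hcond hj
  apply eq_of_nth (gl_pos c j _) hp
  intro i
  rw [nth_gl hs' hcond' hj, nth_fl hs hcond hj]
  split_ifs with h
  · have h2 := nth_anti hs (show i ≤ j - 1 by omega)
    omega
  · rfl

lemma fl_gl (hs : l.Pairwise (· ≥ ·)) (hp : ∀ x ∈ l, x ≠ 0)
    (hcond : nth l (j-1) = nth l j) (hj : 1 ≤ j) :
    fl c j (gl c j l) = l := by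
  have hs' := gl_sorted (c := c) hs hcond hj
  have hcond' := gl_cond (c := c) hs hcond hj
  apply eq_of_nth (fl_pos c j _) hp
  intro i
  rw [nth_fl hs' hcond' hj, nth_gl hs hcond hj]
  split_ifs with h
  · omega
  · rfl

end


lemma partsList_sorted {n : ℕ} (p : n.Partition) : (partsList p).Pairwise (· ≥ ·) :=
  Multiset.pairwise_sort _ _

lemma partsList_pos {n : ℕ} (p : n.Partition) : ∀ x ∈ partsList p, x ≠ 0 := by
  intro x hx
  have hx' : x ∈ p.parts := by
    rw [← Multiset.sort_eq p.parts (· ≥ ·)]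
    exact_mod_cast hx
  exact (p.parts_pos hx').ne'

lemma partsList_sum {n : ℕ} (p : n.Partition) : (partsList p).sum = n := by
  have h := p.parts_sum
  conv at h => rw [← Multiset.sort_eq p.parts (· ≥ ·)]
  rw [Multiset.sum_coe] at h
  exact h

lemma part_eq {n : ℕ} (p : n.Partition) (i : ℕ) : part p i = nth (partsList p) (i-1) := by
  rw [part, nth, List.getD_eq_getElem?_getD]

def ofList (l : List ℕ) (h : ∀ x ∈ l, x ≠ 0) : Nat.Partition l.sum :=
  ⟨(l : Multiset ℕ), fun hi => Nat.pos_of_ne_zero (h _ (by exact_mod_cast hi)), by simp⟩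

lemma parts_ofList (l : List ℕ) (h : ∀ x ∈ l, x ≠ 0) :
    (ofList l h).parts = (l : Multiset ℕ) := rfl

lemma partsList_ofList (l : List ℕ) (h : ∀ x ∈ l, x ≠ 0) (hs : l.Pairwise (· ≥ ·)) :
    partsList (ofList l h) = l := by
  apply List.Perm.eq_of_pairwise' (partsList_sorted _) hs ?_
  exact Multiset.coe_eq_coe.mp (Multiset.sort_eq _ _)

lemma isFlat_iff {r n : ℕ} (p : n.Partition) :
    IsFlat r p ↔ ∀ i, nth (partsList p) i - nth (partsList p) (i+1) ≤ r - 1 := by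
  have hnum : numParts p = (partsList p).length := (Multiset.length_sort _).symm
  constructor
  · intro h i
    by_cases hi : i < (partsList p).length
    · have h2 := h (i+1) (by omega) (by omega)
      rw [part_eq, part_eq] at h2
      have e1 : i + 1 - 1 = i := by omega
      have e2 : i + 1 + 1 - 1 = i + 1 := by omega
      rwa [e1, e2] at h2
    · rw [nth_eq_zero (by omega)]
      simp
  · intro h i h1 _
    rw [part_eq, part_eq]
    have h2 := h (i-1)
    rwa [show i + 1 - 1 = (i - 1) + 1 by omega]

lemma sigma_ext {x y : Σ m : ℕ, m.Partition × ℕ}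
    (hp : x.2.1.parts = y.2.1.parts) (hj : x.2.2 = y.2.2) : x = y := by
  obtain ⟨m, p, j⟩ := x
  obtain ⟨m', p', j'⟩ := y
  simp only at hp hj
  obtain rfl : m = m' := by rw [← p.parts_sum, ← p'.parts_sum, hp]
  obtain rfl : p = p' := Nat.Partition.ext hp
  obtain rfl : j = j' := hj
  rfl

def fmap (c : ℕ) (x : Σ m : ℕ, m.Partition × ℕ) : Σ m : ℕ, m.Partition × ℕ :=
  ⟨_, (ofList (fl c x.2.2 (partsList x.2.1)) (fl_pos _ _ _), x.2.2)⟩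

def gmap (c : ℕ) (x : Σ m : ℕ, m.Partition × ℕ) : Σ m : ℕ, m.Partition × ℕ :=
  ⟨_, (ofList (gl c x.2.2 (partsList x.2.1)) (gl_pos _ _ _), x.2.2)⟩

lemma fmap_spec {n r : ℕ} (hr : 2 ≤ r) (x : Σ m : ℕ, m.Partition × ℕ)
    (h : IsFlat r x.2.1 ∧ 1 ≤ x.2.2 ∧ x.1 + x.2.2 = n ∧
      part x.2.1 x.2.2 - part x.2.1 (x.2.2 + 1) = r - 1) :
    IsFlat r (fmap (r-1) x).2.1 ∧ 1 ≤ (fmap (r-1) x).2.2 ∧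
      (fmap (r-1) x).1 + r * (fmap (r-1) x).2.2 = n ∧
      part (fmap (r-1) x).2.1 ((fmap (r-1) x).2.2) =
        part (fmap (r-1) x).2.1 ((fmap (r-1) x).2.2 + 1) := by
  obtain ⟨m, p, j⟩ := x
  obtain ⟨hflat, hj, hsum, hcnd⟩ := h
  dsimp only at hflat hj hsum hcnd
  have hs := partsList_sorted p
  have hp := partsList_pos p
  have hflat' : ∀ i, nth (partsList p) i - nth (partsList p) (i+1) ≤ r - 1 :=
    (isFlat_iff p).mp hflat
  have hanti := nth_anti hs (show j - 1 ≤ j by omega)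
  have hcnd' : nth (partsList p) (j-1) = nth (partsList p) j + (r-1) := by
    rw [part_eq, part_eq] at hcnd
    rw [show j + 1 - 1 = j by omega] at hcnd
    omega
  have hsort := fl_sorted (c := r-1) hs hcnd' hj
  have hPL := partsList_ofList (fl (r-1) j (partsList p)) (fl_pos _ _ _) hsort
  refine ⟨?_, hj, ?_, ?_⟩
  · show IsFlat r (ofList (fl (r-1) j (partsList p)) (fl_pos _ _ _))
    rw [isFlat_iff, hPL]
    exact fl_flat hs hcnd' hj hflat'
  · show (fl (r-1) j (partsList p)).sum + r * j = n
    have h1 := fl_sum hs hcnd' (show 1 ≤ r - 1 by omega) hj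
    rw [partsList_sum] at h1
    have h2 : (r - 1) * j = r * j - j := Nat.sub_one_mul r j
    have h3 : j ≤ r * j := Nat.le_mul_of_pos_left j (by omega)
    omega
  · show part (ofList (fl (r-1) j (partsList p)) (fl_pos _ _ _)) j =
      part (ofList (fl (r-1) j (partsList p)) (fl_pos _ _ _)) (j+1)
    rw [part_eq, part_eq, hPL, show j + 1 - 1 = j by omega]
    exact fl_cond hs hcnd' hj

lemma gmap_spec {n r : ℕ} (hr : 2 ≤ r) (x : Σ m : ℕ, m.Partition × ℕ)
    (h : IsFlat r x.2.1 ∧ 1 ≤ x.2.2 ∧ x.1 + r * x.2.2 = n ∧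
      part x.2.1 x.2.2 = part x.2.1 (x.2.2 + 1)) :
    IsFlat r (gmap (r-1) x).2.1 ∧ 1 ≤ (gmap (r-1) x).2.2 ∧
      (gmap (r-1) x).1 + (gmap (r-1) x).2.2 = n ∧
      part (gmap (r-1) x).2.1 ((gmap (r-1) x).2.2) -
        part (gmap (r-1) x).2.1 ((gmap (r-1) x).2.2 + 1) = r - 1 := by
  obtain ⟨m, p, j⟩ := x
  obtain ⟨hflat, hj, hsum, hcnd⟩ := h
  dsimp only at hflat hj hsum hcnd
  have hs := partsList_sorted p
  have hp := partsList_pos p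
  have hflat' : ∀ i, nth (partsList p) i - nth (partsList p) (i+1) ≤ r - 1 :=
    (isFlat_iff p).mp hflat
  have hcnd' : nth (partsList p) (j-1) = nth (partsList p) j := by
    rw [part_eq, part_eq] at hcnd
    rwa [show j + 1 - 1 = j by omega] at hcnd
  have hsort := gl_sorted (c := r-1) hs hcnd' hj
  have hPL := partsList_ofList (gl (r-1) j (partsList p)) (gl_pos _ _ _) hsort
  refine ⟨?_, hj, ?_, ?_⟩
  · show IsFlat r (ofList (gl (r-1) j (partsList p)) (gl_pos _ _ _))
    rw [isFlat_iff, hPL]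
    exact gl_flat hs hcnd' hj hflat'
  · show (gl (r-1) j (partsList p)).sum + j = n
    have h1 := gl_sum (c := r-1) (j := j) (l := partsList p)
    rw [partsList_sum] at h1
    have h2 : (r - 1) * j = r * j - j := Nat.sub_one_mul r j
    have h3 : j ≤ r * j := Nat.le_mul_of_pos_left j (by omega)
    omega
  · show part (ofList (gl (r-1) j (partsList p)) (gl_pos _ _ _)) j -
      part (ofList (gl (r-1) j (partsList p)) (gl_pos _ _ _)) (j+1) = r - 1
    rw [part_eq, part_eq, hPL, show j + 1 - 1 = j by omega]
    have := gl_cond (c := r-1) hs hcnd' hj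
    omega

lemma gmap_fmap {n r : ℕ} (hr : 2 ≤ r) (x : Σ m : ℕ, m.Partition × ℕ)
    (h : IsFlat r x.2.1 ∧ 1 ≤ x.2.2 ∧ x.1 + x.2.2 = n ∧
      part x.2.1 x.2.2 - part x.2.1 (x.2.2 + 1) = r - 1) :
    gmap (r-1) (fmap (r-1) x) = x := by
  obtain ⟨m, p, j⟩ := x
  obtain ⟨hflat, hj, hsum, hcnd⟩ := h
  dsimp only at hflat hj hsum hcnd
  have hs := partsList_sorted p
  have hp := partsList_pos p
  have hanti := nth_anti hs (show j - 1 ≤ j by omega)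
  have hcnd' : nth (partsList p) (j-1) = nth (partsList p) j + (r-1) := by
    rw [part_eq, part_eq] at hcnd
    rw [show j + 1 - 1 = j by omega] at hcnd
    omega
  have hsort := fl_sorted (c := r-1) hs hcnd' hj
  have hPL := partsList_ofList (fl (r-1) j (partsList p)) (fl_pos _ _ _) hsort
  apply sigma_ext
  case hj => rfl
  show (ofList (gl (r-1) j (partsList (ofList (fl (r-1) j (partsList p)) (fl_pos _ _ _))))
      (gl_pos _ _ _)).parts = p.parts
  rw [parts_ofList, hPL, gl_fl (c := r-1) hs hp hcnd' hj]
  exact Multiset.sort_eq _ _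

lemma fmap_gmap {n r : ℕ} (hr : 2 ≤ r) (x : Σ m : ℕ, m.Partition × ℕ)
    (h : IsFlat r x.2.1 ∧ 1 ≤ x.2.2 ∧ x.1 + r * x.2.2 = n ∧
      part x.2.1 x.2.2 = part x.2.1 (x.2.2 + 1)) :
    fmap (r-1) (gmap (r-1) x) = x := by
  obtain ⟨m, p, j⟩ := x
  obtain ⟨hflat, hj, hsum, hcnd⟩ := h
  dsimp only at hflat hj hsum hcnd
  have hs := partsList_sorted p
  have hp := partsList_pos p
  have hcnd' : nth (partsList p) (j-1) = nth (partsList p) j := by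
    rw [part_eq, part_eq] at hcnd
    rwa [show j + 1 - 1 = j by omega] at hcnd
  have hsort := gl_sorted (c := r-1) hs hcnd' hj
  have hPL := partsList_ofList (gl (r-1) j (partsList p)) (gl_pos _ _ _) hsort
  apply sigma_ext
  case hj => rfl
  show (ofList (fl (r-1) j (partsList (ofList (gl (r-1) j (partsList p)) (gl_pos _ _ _))))
      (fl_pos _ _ _)).parts = p.parts
  rw [parts_ofList, hPL, fl_gl (c := r-1) hs hp hcnd' hj]
  exact Multiset.sort_eq _ _

theorem pairs_A_eq_pairs_B (n r : ℕ) (hr : 2 ≤ r) :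
    Nat.card {x : Σ m : ℕ, m.Partition × ℕ //
        IsFlat r x.2.1 ∧ 1 ≤ x.2.2 ∧ x.1 + x.2.2 = n ∧
          part x.2.1 x.2.2 - part x.2.1 (x.2.2 + 1) = r - 1} =
      Nat.card {x : Σ m : ℕ, m.Partition × ℕ //
        IsFlat r x.2.1 ∧ 1 ≤ x.2.2 ∧ x.1 + r * x.2.2 = n ∧
          part x.2.1 x.2.2 = part x.2.1 (x.2.2 + 1)} := by
  apply Nat.card_congr
  exact
    { toFun := fun x => ⟨fmap (r-1) x.1, fmap_spec hr x.1 x.2⟩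
      invFun := fun y => ⟨gmap (r-1) y.1, gmap_spec hr y.1 y.2⟩
      left_inv := fun x => Subtype.ext (gmap_fmap hr x.1 x.2)
      right_inv := fun y => Subtype.ext (fmap_gmap hr y.1 y.2) }

end BeckPaper
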